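/- In a nondegenerate tetrahedron, the altitudes h_i and h_j have a common point if and only if the opposite edges a_i a_j and a_k a_l are orthogonal, i.e., (a_k - a_l)·(a_i - a_j) = 0. -/

import Mathlib

open RealInnerProductSpace

/-- The altitude `h_m` of the tetrahedron `a 0, …, a 3`: the line through the
vertex `a m` perpendicular to the plane of the other three vertices. -/
def altitude (a : Fin 4 → EuclideanSpace ℝ (Fin 3)) (m : Fin 4) :
    Set (EuclideanSpace ℝ (Fin 3)) :=
  {x | ∀ r s : Fin 4, r ≠ m → s ≠ m → ⟪a r - a s, a m - x⟫ = 0}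

/-- In a nondegenerate tetrahedron, the altitudes `h_i` and `h_j` have a common
point if and only if the opposite edges `a_i a_j` and `a_k a_l` are orthogonal,
i.e. `(a_k - a_l)·(a_i - a_j) = 0`. -/
theorem stmt_5 (a : Fin 4 → EuclideanSpace ℝ (Fin 3))
    (ha : AffineIndependent ℝ a)
    (i j k l : Fin 4) (hij : i ≠ j) (hik : i ≠ k) (hil : i ≠ l)
    (hjk : j ≠ k) (hjl : j ≠ l) (hkl : k ≠ l) :
    (∃ x, x ∈ altitude a i ∧ x ∈ altitude a j) ↔ ⟪a k - a l, a i - a j⟫ = 0 := by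
  constructor
  · rintro ⟨x, hxi, hxj⟩
    have h1 := hxi k l hik.symm hil.symm
    have h2 := hxj k l hjk.symm hjl.symm
    have : a i - a j = (a i - x) - (a j - x) := by abel
    rw [this, inner_sub_right, h1, h2, sub_zero]
  · intro horth
    set u := a i - a l with hu
    set v := a j - a l with hv
    set w := a k - a l with hw
    -- linear independence of u, v, w
    have hli : LinearIndependent ℝ ![u, v, w] := by
      rw [affineIndependent_iff_linearIndependent_vsub ℝ a l] at ha
      have he : Function.Injective
          (![⟨i, hil⟩, ⟨j, hjl⟩, ⟨k, hkl⟩] : Fin 3 → {x : Fin 4 // x ≠ l}) := by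
        intro p q hpq
        fin_cases p <;> fin_cases q <;> simp_all
      have := ha.comp _ he
      convert this using 1
      funext p
      fin_cases p <;> simp [hu, hv, hw]
      rfl
    haveI : Nonempty (Fin 3) := ⟨0⟩
    let B : Module.Basis (Fin 3) ℝ (EuclideanSpace ℝ (Fin 3)) :=
      basisOfLinearIndependentOfCardEqFinrank hli
        (by rw [finrank_euclideanSpace_fin]; rfl)
    have hB : ∀ p, B p = ![u, v, w] p := fun p => by
      simp [B, coe_basisOfLinearIndependentOfCardEqFinrank]
    -- desired inner products with u, v, w
    let c : Fin 3 → ℝ := ![⟪u, v⟫, ⟪v, u⟫, ⟪w, u⟫]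
    let f : EuclideanSpace ℝ (Fin 3) →ₗ[ℝ] ℝ := B.constr ℝ c
    let y : EuclideanSpace ℝ (Fin 3) := (InnerProductSpace.toDual ℝ (EuclideanSpace ℝ (Fin 3))).symm
      (LinearMap.toContinuousLinearMap f)
    have hy : ∀ p : Fin 3, ⟪![u, v, w] p, y⟫ = c p := by
      intro p
      rw [real_inner_comm, ← hB p]
      have := InnerProductSpace.toDual_symm_apply
        (E := EuclideanSpace ℝ (Fin 3)) (𝕜 := ℝ) (x := B p) (y := LinearMap.toContinuousLinearMap f)
      rw [this]
      simp [f, Module.Basis.constr_basis]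
    have hyu : ⟪u, y⟫ = ⟪u, v⟫ := hy 0
    have hyv : ⟪v, y⟫ = ⟪v, u⟫ := hy 1
    have hyw : ⟪w, y⟫ = ⟪w, u⟫ := hy 2
    have hwv : ⟪w, v⟫ = ⟪w, u⟫ := by
      have : (0:ℝ) = ⟪w, u⟫ - ⟪w, v⟫ := by
        rw [← inner_sub_right]
        have : u - v = a i - a j := by rw [hu, hv]; abel
        rw [this]; exact horth.symm
      linarith
    refine ⟨a l + y, ?_, ?_⟩
    · intro r s hr hs
      have hix : a i - (a l + y) = u - y := by simp [hu]; abel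
      rw [hix]
      have key : ∀ m : Fin 4, m ≠ i → ⟪a m - a l, u - y⟫ = 0 := by
        intro m hm
        have : m = j ∨ m = k ∨ m = l := by omega
        rcases this with rfl | rfl | rfl
        · rw [← hv, inner_sub_right, hyv, real_inner_comm u v]; ring
        · rw [← hw, inner_sub_right, hyw]; ring
        · simp
      have hrs : a r - a s = (a r - a l) - (a s - a l) := by abel
      rw [hrs, inner_sub_left, key r hr, key s hs, sub_zero]
    · intro r s hr hs
      have hjx : a j - (a l + y) = v - y := by simp [hv]; abel
      rw [hjx]
      have key : ∀ m : Fin 4, m ≠ j → ⟪a m - a l, v - y⟫ = 0 := by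
        intro m hm
        have : m = i ∨ m = k ∨ m = l := by omega
        rcases this with rfl | rfl | rfl
        · rw [← hu, inner_sub_right, hyu]; ring
        · rw [← hw, inner_sub_right, hyw, hwv]; ring
        · simp
      have hrs : a r - a s = (a r - a l) - (a s - a l) := by abel
      rw [hrs, inner_sub_left, key r hr, key s hs, sub_zero]
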